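/- First-order expansion of the zero-temperature order parameters near the balanced aspect ratio: writing γ = 1 + ε, the solutions of Φ(α_y) = γ Φ(α_x) and √γ α_x √(q(α_y)) + α_y √(q(α_x)) = 0 satisfy, to first order in ε, α_x = −√(π/8) ε + O(ε²) and α_y = +√(π/8) ε + O(ε²); in particular b₁ − a₁ = √(π/2) and a₁ + b₁ = 0 where a₁, b₁ are the linear coefficients. -/

import Mathlib

open MeasureTheory ProbabilityTheory Real Set

/-- Standard normal density. -/
noncomputable def gaussPdf (z : ℝ) : ℝ :=
  (Real.sqrt (2 * Real.pi))⁻¹ * Real.exp (-z ^ 2 / 2)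

/-- Standard normal CDF. -/
noncomputable def PhiCdf (α : ℝ) : ℝ := ∫ z in Set.Iic α, gaussPdf z

/-- `A(α) = E[(Z+α)₊]` for `Z ~ N(0,1)`. -/
noncomputable def Afun (α : ℝ) : ℝ := ∫ z, max (z + α) 0 ∂(gaussianReal 0 1)

/-- `B(α) = E[(Z+α)₊²]` for `Z ~ N(0,1)`. -/
noncomputable def Bfun (α : ℝ) : ℝ := ∫ z, (max (z + α) 0) ^ 2 ∂(gaussianReal 0 1)

/-- `q(α) = B(α)/A(α)²`. -/
noncomputable def qfun (α : ℝ) : ℝ := Bfun α / (Afun α) ^ 2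

lemma gaussPdf_nonneg (z : ℝ) : 0 ≤ gaussPdf z := by
  unfold gaussPdf; positivity

lemma continuous_gaussPdf : Continuous gaussPdf := by
  unfold gaussPdf
  fun_prop

lemma gaussPdf_eq' : gaussPdf = fun z => (Real.sqrt (2 * Real.pi))⁻¹ * Real.exp (-(1/2) * z ^ 2) := by
  funext z; unfold gaussPdf; ring_nf

lemma integrable_gaussPdf : Integrable gaussPdf := by
  rw [gaussPdf_eq']
  exact (integrable_exp_neg_mul_sq (by norm_num : (0:ℝ) < 1/2)).const_mul _

lemma integral_gaussPdf : ∫ z, gaussPdf z = 1 := by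
  rw [gaussPdf_eq', integral_const_mul, integral_gaussian]
  rw [show Real.pi / (1/2) = 2 * Real.pi by ring]
  rw [inv_mul_cancel₀ (by positivity)]

lemma PhiCdf_zero : PhiCdf 0 = 1/2 := by
  have hsplit := intervalIntegral.integral_Iic_add_Ioi (b := (0:ℝ)) (μ := volume)
    integrable_gaussPdf.integrableOn integrable_gaussPdf.integrableOn
  have hsym : ∫ z in Set.Iic (0:ℝ), gaussPdf z = ∫ z in Set.Ioi (0:ℝ), gaussPdf z := by
    have := integral_comp_neg_Ioi (c := (0:ℝ)) (f := gaussPdf)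
    rw [neg_zero] at this
    rw [← this]
    congr 1; funext z
    unfold gaussPdf; ring_nf
  rw [integral_gaussPdf] at hsplit
  unfold PhiCdf
  rw [hsym] at hsplit ⊢
  linarith

lemma hasDerivAt_PhiCdf : HasDerivAt PhiCdf (gaussPdf 0) 0 := by
  have hF : HasDerivAt (fun x => ∫ t in (0:ℝ)..x, gaussPdf t) (gaussPdf 0) 0 := by
    refine intervalIntegral.integral_hasDerivAt_right
      (integrable_gaussPdf.intervalIntegrable)
      (continuous_gaussPdf.stronglyMeasurableAtFilter _ _)
      continuous_gaussPdf.continuousAt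
  have : PhiCdf = fun x => (∫ t in (0:ℝ)..x, gaussPdf t) + PhiCdf 0 := by
    funext x
    unfold PhiCdf
    rw [← intervalIntegral.integral_Iic_sub_Iic integrable_gaussPdf.integrableOn
      integrable_gaussPdf.integrableOn]
    ring
  rw [this]
  simpa using hF.add_const (PhiCdf 0)

lemma gaussianReal_std :
    gaussianReal 0 1 = volume.withDensity (fun x => ((gaussPdf x).toNNReal : ENNReal)) := by
  rw [gaussianReal_of_var_ne_zero _ one_ne_zero]
  congr 1
  funext x
  rw [gaussianPDF_def]
  unfold gaussianPDFReal
  rw [show ((gaussPdf x).toNNReal : ENNReal) = ENNReal.ofReal (gaussPdf x) from rfl]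
  unfold gaussPdf
  norm_num

lemma integral_gauss_eq (g : ℝ → ℝ) :
    ∫ z, g z ∂(gaussianReal 0 1) = ∫ z, gaussPdf z * g z := by
  rw [gaussianReal_std, integral_withDensity_eq_integral_smul
    (continuous_gaussPdf.measurable.real_toNNReal) g]
  congr 1; funext z
  simp [NNReal.smul_def, Real.coe_toNNReal _ (gaussPdf_nonneg z)]

lemma integrable_gauss_iff (g : ℝ → ℝ) :
    Integrable g (gaussianReal 0 1) ↔ Integrable (fun z => gaussPdf z * g z) := by
  rw [gaussianReal_std,
    integrable_withDensity_iff_integrable_smul (continuous_gaussPdf.measurable.real_toNNReal)]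
  constructor <;> intro h <;> [skip; skip] <;>
  · refine h.congr ?_
    filter_upwards with z
    simp [NNReal.smul_def, Real.coe_toNNReal _ (gaussPdf_nonneg z)]

-- integrability of |z| and z^2 against the pdf, over volume
lemma integrable_pdf_abs : Integrable (fun z => gaussPdf z * |z|) := by
  have h := (integrable_mul_exp_neg_mul_sq (by norm_num : (0:ℝ) < 1/2)).abs
  refine (h.const_mul ((Real.sqrt (2 * Real.pi))⁻¹)).congr ?_
  filter_upwards with z
  rw [abs_mul, abs_of_pos (exp_pos _)]
  unfold gaussPdf
  ring_nf

lemma integrable_pdf_sq : Integrable (fun z => gaussPdf z * z ^ 2) := by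
  have hbound : Integrable (fun z : ℝ => (Real.sqrt (2 * Real.pi))⁻¹ *
      (4 * Real.exp (-(1/4) * z ^ 2))) :=
    ((integrable_exp_neg_mul_sq (by norm_num : (0:ℝ) < 1/4)).const_mul 4).const_mul _
  refine hbound.mono' ?_ ?_
  · exact (continuous_gaussPdf.mul (continuous_pow 2)).aestronglyMeasurable
  · filter_upwards with z
    have hgz : (0:ℝ) ≤ gaussPdf z * z ^ 2 :=
      mul_nonneg (gaussPdf_nonneg z) (sq_nonneg z)
    rw [Real.norm_eq_abs, abs_of_nonneg hgz]
    unfold gaussPdf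
    have h1 : z ^ 2 ≤ 4 * Real.exp (z ^ 2 / 4) := by
      have := Real.add_one_le_exp (z ^ 2 / 4)
      nlinarith [sq_nonneg z, Real.exp_pos (z ^ 2 / 4)]
    have h2 : Real.exp (-z ^ 2 / 2) * z ^ 2 ≤ 4 * Real.exp (-(1/4) * z ^ 2) := by
      calc Real.exp (-z ^ 2 / 2) * z ^ 2 ≤ Real.exp (-z ^ 2 / 2) * (4 * Real.exp (z ^ 2 / 4)) := by
            exact mul_le_mul_of_nonneg_left h1 (le_of_lt (exp_pos _))
        _ = 4 * (Real.exp (-z ^ 2 / 2) * Real.exp (z ^ 2 / 4)) := by ring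
        _ = 4 * Real.exp (-(1/4) * z ^ 2) := by
            rw [← Real.exp_add]; ring_nf
    have hc : (0:ℝ) ≤ (Real.sqrt (2 * Real.pi))⁻¹ := by positivity
    nlinarith [mul_le_mul_of_nonneg_left h2 hc]

lemma integrable_max_gauss (α : ℝ) :
    Integrable (fun z => max (z + α) 0) (gaussianReal 0 1) := by
  rw [integrable_gauss_iff]
  have hbound : Integrable (fun z => gaussPdf z * |z| + gaussPdf z * |α|) :=
    integrable_pdf_abs.add (integrable_gaussPdf.mul_const _)
  refine hbound.mono' ?_ ?_
  · exact (continuous_gaussPdf.mul ((continuous_id.add continuous_const).max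
      continuous_const)).aestronglyMeasurable
  · filter_upwards with z
    rw [Real.norm_eq_abs, abs_mul, abs_of_nonneg (gaussPdf_nonneg z)]
    have h1 : |max (z + α) 0| ≤ |z| + |α| := by
      rw [abs_of_nonneg (le_max_right _ _)]
      rcases le_total (z + α) 0 with h | h
      · rw [max_eq_right h]; positivity
      · rw [max_eq_left h]
        exact add_le_add (le_abs_self z) (le_abs_self α)
    have h2 : gaussPdf z * |max (z + α) 0| ≤ gaussPdf z * (|z| + |α|) :=
      mul_le_mul_of_nonneg_left h1 (gaussPdf_nonneg z)
    linarith

lemma integrable_max_sq_gauss (α : ℝ) :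
    Integrable (fun z => (max (z + α) 0) ^ 2) (gaussianReal 0 1) := by
  rw [integrable_gauss_iff]
  have hbound : Integrable (fun z => gaussPdf z * (2 * z ^ 2) + gaussPdf z * (2 * α ^ 2)) :=
    ((integrable_pdf_sq.const_mul 2).congr (by filter_upwards with z; ring)).add
      (integrable_gaussPdf.mul_const _)
  refine hbound.mono' ?_ ?_
  · exact (continuous_gaussPdf.mul (((continuous_id.add continuous_const).max
      continuous_const).pow 2)).aestronglyMeasurable
  · filter_upwards with z
    have hm : (0:ℝ) ≤ max (z + α) 0 := le_max_right _ _
    have hgz : (0:ℝ) ≤ gaussPdf z * (max (z + α) 0) ^ 2 :=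
      mul_nonneg (gaussPdf_nonneg z) (sq_nonneg _)
    rw [Real.norm_eq_abs, abs_of_nonneg hgz]
    have h1 : (max (z + α) 0) ^ 2 ≤ 2 * z ^ 2 + 2 * α ^ 2 := by
      rcases le_total (z + α) 0 with h | h
      · rw [max_eq_right h]
        nlinarith [sq_nonneg z, sq_nonneg α]
      · rw [max_eq_left h]
        nlinarith [sq_nonneg (z - α)]
    have h2 : gaussPdf z * (max (z + α) 0) ^ 2 ≤ gaussPdf z * (2 * z ^ 2 + 2 * α ^ 2) :=
      mul_le_mul_of_nonneg_left h1 (gaussPdf_nonneg z)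
    linarith

-- ∫_{Ioi 0} z * exp (-z^2/2) = 1
lemma integral_Ioi_mul_exp : ∫ z in Ioi (0:ℝ), z * Real.exp (-z ^ 2 / 2) = 1 := by
  have hderiv : ∀ x ∈ Ici (0:ℝ),
      HasDerivAt (fun z : ℝ => -Real.exp (-z ^ 2 / 2)) (x * Real.exp (-x ^ 2 / 2)) x := by
    intro x _
    have h1 : HasDerivAt (fun z : ℝ => -z ^ 2 / 2) (-x) x := by
      have := ((hasDerivAt_pow 2 x).neg).div_const 2
      simpa using this.congr_deriv (by push_cast; ring)
    have := (h1.exp).neg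
    exact this.congr_deriv (by ring)
  have hint : IntegrableOn (fun x : ℝ => x * Real.exp (-x ^ 2 / 2)) (Ioi 0) := by
    have := (integrable_mul_exp_neg_mul_sq (by norm_num : (0:ℝ) < 1/2)).integrableOn
      (s := Ioi (0:ℝ))
    refine this.congr_fun ?_ measurableSet_Ioi
    intro x _; ring_nf
  have htend : Filter.Tendsto (fun z : ℝ => -Real.exp (-z ^ 2 / 2)) Filter.atTop (nhds 0) := by
    rw [show (0:ℝ) = -0 by norm_num]
    refine (Real.tendsto_exp_atBot.comp ?_).neg
    apply Filter.Tendsto.atBot_div_const (by norm_num : (0:ℝ) < 2)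
    have h2 : Filter.Tendsto (fun z : ℝ => z ^ 2) Filter.atTop Filter.atTop :=
      Filter.tendsto_atTop_mono (fun z : ℝ => by nlinarith [sq_nonneg (z-1)] : ∀ z : ℝ, z - 1 ≤ z ^ 2)
        (Filter.tendsto_atTop_add_const_right _ (-1) Filter.tendsto_id |>.congr (by intro z; simp [sub_eq_add_neg]))
    exact Filter.tendsto_neg_atBot_iff.mpr h2
  have := integral_Ioi_of_hasDerivAt_of_tendsto' hderiv hint htend
  rw [this]
  norm_num

lemma integral_Ioi_sq_exp :
    ∫ z in Ioi (0:ℝ), z ^ 2 * Real.exp (-z ^ 2 / 2)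
      = ∫ z in Ioi (0:ℝ), Real.exp (-z ^ 2 / 2) := by
  have hderiv : ∀ x ∈ Ici (0:ℝ),
      HasDerivAt (fun z : ℝ => -(z * Real.exp (-z ^ 2 / 2)))
        ((x ^ 2 - 1) * Real.exp (-x ^ 2 / 2)) x := by
    intro x _
    have h1 : HasDerivAt (fun z : ℝ => -z ^ 2 / 2) (-x) x := by
      have := ((hasDerivAt_pow 2 x).neg).div_const 2
      simpa using this.congr_deriv (by push_cast; ring)
    have h2 := ((hasDerivAt_id x).mul h1.exp).neg
    simp only [id_eq, one_mul] at h2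
    exact h2.congr_deriv (by ring)
  have hintE : IntegrableOn (fun x : ℝ => Real.exp (-x ^ 2 / 2)) (Ioi 0) := by
    have := (integrable_exp_neg_mul_sq (by norm_num : (0:ℝ) < 1/2)).integrableOn
      (s := Ioi (0:ℝ))
    refine this.congr_fun ?_ measurableSet_Ioi
    intro x _; ring_nf
  have hintSq : IntegrableOn (fun x : ℝ => x ^ 2 * Real.exp (-x ^ 2 / 2)) (Ioi 0) := by
    have := integrableOn_rpow_mul_exp_neg_mul_sq (by norm_num : (0:ℝ) < 1/2)
      (by norm_num : (-1:ℝ) < 2)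
    refine this.congr_fun ?_ measurableSet_Ioi
    intro x hx
    simp only
    rw [show x ^ (2:ℝ) = x ^ (2:ℕ) by rw [← Real.rpow_natCast x 2]; norm_num]
    ring_nf
  have hint : IntegrableOn (fun x : ℝ => (x ^ 2 - 1) * Real.exp (-x ^ 2 / 2)) (Ioi 0) := by
    exact IntegrableOn.congr_fun (hintSq.sub hintE)
      (fun x _ => by simp [Pi.sub_apply]; ring) measurableSet_Ioi
  have htend : Filter.Tendsto (fun z : ℝ => -(z * Real.exp (-z ^ 2 / 2)))
      Filter.atTop (nhds 0) := by
    rw [show (0:ℝ) = -0 by norm_num]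
    apply Filter.Tendsto.neg
    have hoo := rpow_mul_exp_neg_mul_sq_isLittleO_exp_neg (by norm_num : (0:ℝ) < 1/2) 1
    have hlin : Filter.Tendsto (fun x : ℝ => -(1/2) * x) Filter.atTop Filter.atBot := by
      have : Filter.Tendsto (fun x : ℝ => (1/2 : ℝ) * x) Filter.atTop Filter.atTop :=
        Filter.Tendsto.const_mul_atTop (by norm_num) Filter.tendsto_id
      exact (Filter.tendsto_neg_atTop_atBot.comp this).congr (fun x => by simp [Function.comp])
    have h0 : Filter.Tendsto (fun x : ℝ => Real.exp (-(1/2) * x)) Filter.atTop (nhds 0) :=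
      Real.tendsto_exp_atBot.comp hlin
    have := hoo.isBigO.trans_tendsto h0
    refine this.congr' ?_
    filter_upwards [Filter.eventually_ge_atTop (0:ℝ)] with x hx
    rw [Real.rpow_one]
    ring_nf
  have := integral_Ioi_of_hasDerivAt_of_tendsto' hderiv hint htend
  norm_num at this
  have h2 : ∫ x in Ioi (0:ℝ), ((x ^ 2 - 1) * Real.exp (-x ^ 2 / 2))
      = (∫ x in Ioi (0:ℝ), x ^ 2 * Real.exp (-x ^ 2 / 2)) - ∫ x in Ioi (0:ℝ), Real.exp (-x ^ 2 / 2) := by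
    rw [← integral_sub hintSq hintE]
    congr 1; funext x; ring
  rw [h2] at this
  linarith

lemma Afun_zero : Afun 0 = (Real.sqrt (2 * Real.pi))⁻¹ := by
  unfold Afun
  rw [integral_gauss_eq]
  have hsplit : ∫ z, gaussPdf z * max (z + 0) 0
      = ∫ z in Ioi (0:ℝ), gaussPdf z * max (z + 0) 0 := by
    rw [← intervalIntegral.integral_Iic_add_Ioi (b := (0:ℝ)) (μ := volume) ?hl ?hr]
    · have : ∫ z in Iic (0:ℝ), gaussPdf z * max (z + 0) 0 = 0 := by
        rw [setIntegral_congr_fun measurableSet_Iic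
          (g := fun _ => (0:ℝ)) ?_]
        · simp
        · intro z hz
          simp only [add_zero]
          rw [max_eq_right (by exact hz : z ≤ 0)]
          ring
      rw [this]; ring
    case hl =>
      refine IntegrableOn.congr_fun (integrableOn_zero) ?_ measurableSet_Iic
      intro z hz
      simp only [add_zero, Pi.zero_apply]
      rw [max_eq_right (by exact hz : z ≤ 0)]
      ring
    case hr =>
      have h := (integrable_mul_exp_neg_mul_sq (by norm_num : (0:ℝ) < 1/2)).integrableOn
        (s := Ioi (0:ℝ))
      refine IntegrableOn.congr_fun (h.const_mul ((Real.sqrt (2 * Real.pi))⁻¹)) ?_ measurableSet_Ioi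
      intro z hz
      simp only [add_zero]
      rw [max_eq_left (le_of_lt hz)]
      unfold gaussPdf
      ring_nf
  rw [hsplit]
  have : ∫ z in Ioi (0:ℝ), gaussPdf z * max (z + 0) 0
      = (Real.sqrt (2 * Real.pi))⁻¹ * ∫ z in Ioi (0:ℝ), z * Real.exp (-z ^ 2 / 2) := by
    rw [← integral_const_mul]
    refine setIntegral_congr_fun measurableSet_Ioi ?_
    intro z hz
    simp only [add_zero]
    rw [max_eq_left (le_of_lt hz)]
    unfold gaussPdf
    ring
  rw [this, integral_Ioi_mul_exp, mul_one]

lemma Bfun_zero : Bfun 0 = 1/2 := by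
  unfold Bfun
  rw [integral_gauss_eq]
  have hsplit : ∫ z, gaussPdf z * (max (z + 0) 0) ^ 2
      = ∫ z in Ioi (0:ℝ), gaussPdf z * (max (z + 0) 0) ^ 2 := by
    rw [← intervalIntegral.integral_Iic_add_Ioi (b := (0:ℝ)) (μ := volume) ?hl ?hr]
    · have : ∫ z in Iic (0:ℝ), gaussPdf z * (max (z + 0) 0) ^ 2 = 0 := by
        rw [setIntegral_congr_fun measurableSet_Iic (g := fun _ => (0:ℝ)) ?_]
        · simp
        · intro z hz
          simp only [add_zero]
          rw [max_eq_right (by exact hz : z ≤ 0)]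
          ring
      rw [this]; ring
    case hl =>
      refine IntegrableOn.congr_fun (integrableOn_zero) ?_ measurableSet_Iic
      intro z hz
      simp only [add_zero, Pi.zero_apply]
      rw [max_eq_right (by exact hz : z ≤ 0)]
      ring
    case hr =>
      have h := integrableOn_rpow_mul_exp_neg_mul_sq (by norm_num : (0:ℝ) < 1/2)
        (by norm_num : (-1:ℝ) < 2)
      refine IntegrableOn.congr_fun (h.const_mul ((Real.sqrt (2 * Real.pi))⁻¹)) ?_ measurableSet_Ioi
      intro z hz
      simp only [add_zero]
      rw [show z ^ (2:ℝ) = z ^ (2:ℕ) by rw [← Real.rpow_natCast z 2]; norm_num,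
        max_eq_left (le_of_lt hz)]
      unfold gaussPdf
      ring_nf
  rw [hsplit]
  have : ∫ z in Ioi (0:ℝ), gaussPdf z * (max (z + 0) 0) ^ 2
      = (Real.sqrt (2 * Real.pi))⁻¹ * ∫ z in Ioi (0:ℝ), z ^ 2 * Real.exp (-z ^ 2 / 2) := by
    rw [← integral_const_mul]
    refine setIntegral_congr_fun measurableSet_Ioi ?_
    intro z hz
    simp only [add_zero]
    rw [max_eq_left (le_of_lt hz)]
    unfold gaussPdf
    ring
  rw [this, integral_Ioi_sq_exp]
  have hE : ∫ z in Ioi (0:ℝ), Real.exp (-z ^ 2 / 2) = Real.sqrt (2 * Real.pi) / 2 := by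
    have := integral_gaussian_Ioi (1/2)
    rw [show Real.pi / (1/2) = 2 * Real.pi by ring] at this
    rw [← this]
    refine setIntegral_congr_fun measurableSet_Ioi ?_
    intro z _
    ring_nf
  rw [hE]
  have hne : Real.sqrt (2*Real.pi) ≠ 0 := by positivity
  field_simp

lemma integrable_abs_gauss : Integrable (fun z => |z|) (gaussianReal 0 1) := by
  rw [integrable_gauss_iff]
  exact integrable_pdf_abs


lemma abs_Afun_sub (α : ℝ) : |Afun α - Afun 0| ≤ |α| := by
  unfold Afun
  rw [← integral_sub (integrable_max_gauss α) (integrable_max_gauss 0)]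
  calc |∫ z, (max (z + α) 0 - max (z + 0) 0) ∂(gaussianReal 0 1)|
      ≤ ∫ z, |max (z + α) 0 - max (z + 0) 0| ∂(gaussianReal 0 1) := by
        simpa [Real.norm_eq_abs] using norm_integral_le_integral_norm
          (μ := gaussianReal 0 1) (f := fun z => max (z + α) 0 - max (z + 0) 0)
    _ ≤ ∫ _, |α| ∂(gaussianReal 0 1) := by
        refine integral_mono ((integrable_max_gauss α).sub (integrable_max_gauss 0)).abs
          (integrable_const _) ?_
        intro z
        calc |max (z + α) 0 - max (z + 0) 0| ≤ |z + α - (z + 0)| :=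
              abs_max_sub_max_le_abs _ _ _
          _ = |α| := by rw [show z + α - (z + 0) = α by ring]
    _ = |α| := by simp

lemma abs_Bfun_sub (α : ℝ) (hα : |α| ≤ 1) :
    |Bfun α - Bfun 0| ≤ |α| * ∫ z, (2 * |z| + 1) ∂(gaussianReal 0 1) := by
  have hint : Integrable (fun z : ℝ => 2 * |z| + 1) (gaussianReal 0 1) :=
    (integrable_abs_gauss.const_mul 2).add (integrable_const 1)
  unfold Bfun
  rw [← integral_sub (integrable_max_sq_gauss α) (integrable_max_sq_gauss 0)]
  calc |∫ z, ((max (z + α) 0) ^ 2 - (max (z + 0) 0) ^ 2) ∂(gaussianReal 0 1)|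
      ≤ ∫ z, |(max (z + α) 0) ^ 2 - (max (z + 0) 0) ^ 2| ∂(gaussianReal 0 1) := by
        simpa [Real.norm_eq_abs] using norm_integral_le_integral_norm
          (μ := gaussianReal 0 1) (f := fun z => (max (z + α) 0) ^ 2 - (max (z + 0) 0) ^ 2)
    _ ≤ ∫ z, |α| * (2 * |z| + 1) ∂(gaussianReal 0 1) := by
        refine integral_mono
          ((integrable_max_sq_gauss α).sub (integrable_max_sq_gauss 0)).abs
          (hint.const_mul _) ?_
        intro z
        have ha : max (z + α) 0 ≤ |z| + 1 := by
          rcases le_total (z + α) 0 with h | h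
          · rw [max_eq_right h]; positivity
          · rw [max_eq_left h]
            have := le_abs_self z
            have := (le_abs_self α).trans hα
            linarith
        have hb : max (z + 0) 0 ≤ |z| := by
          rcases le_total (z + 0 : ℝ) 0 with h | h
          · rw [max_eq_right h]; positivity
          · rw [max_eq_left h]
            simpa using le_abs_self z
        have hd : |max (z + α) 0 - max (z + 0) 0| ≤ |α| := by
          calc |max (z + α) 0 - max (z + 0) 0| ≤ |z + α - (z + 0)| :=
                abs_max_sub_max_le_abs _ _ _
            _ = |α| := by rw [show z + α - (z + 0) = α by ring]
        have h0a : (0:ℝ) ≤ max (z + α) 0 := le_max_right _ _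
        have h0b : (0:ℝ) ≤ max (z + 0) 0 := le_max_right _ _
        calc |(max (z + α) 0) ^ 2 - (max (z + 0) 0) ^ 2|
            = |max (z + α) 0 - max (z + 0) 0| * |max (z + α) 0 + max (z + 0) 0| := by
              rw [← abs_mul]; congr 1; ring
          _ ≤ |α| * (2 * |z| + 1) := by
              refine mul_le_mul hd ?_ (abs_nonneg _) (abs_nonneg _)
              rw [abs_of_nonneg (by linarith)]
              have := abs_nonneg z
              linarith
    _ = |α| * ∫ z, (2 * |z| + 1) ∂(gaussianReal 0 1) := integral_const_mul _ _

lemma continuousAt_Afun : ContinuousAt Afun 0 := by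
  rw [Metric.continuousAt_iff]
  intro ε hε
  exact ⟨ε, hε, fun {α} h => lt_of_le_of_lt (by simpa [Real.dist_eq] using abs_Afun_sub α)
    (by simpa [Real.dist_eq] using h)⟩

lemma continuousAt_Bfun : ContinuousAt Bfun 0 := by
  set M := ∫ z, (2 * |z| + 1) ∂(gaussianReal 0 1) with hM
  have hM0 : 0 < M + 1 := by
    have : 0 ≤ M := integral_nonneg (fun z => by positivity)
    linarith
  rw [Metric.continuousAt_iff]
  intro ε hε
  refine ⟨min 1 (ε / (M + 1)), by positivity, fun {α} h => ?_⟩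
  rw [Real.dist_eq] at h ⊢
  simp only [sub_zero] at h
  have h1 : |α| ≤ 1 := le_of_lt (lt_of_lt_of_le h (min_le_left _ _))
  have h2 : |α| < ε / (M + 1) := lt_of_lt_of_le h (min_le_right _ _)
  calc |Bfun α - Bfun 0| ≤ |α| * M := abs_Bfun_sub α h1
    _ ≤ |α| * (M + 1) := by nlinarith [abs_nonneg α]
    _ < ε / (M + 1) * (M + 1) := by
        exact mul_lt_mul_of_pos_right h2 hM0
    _ = ε := by field_simp

lemma qfun_zero : qfun 0 = Real.pi := by
  unfold qfun
  rw [Afun_zero, Bfun_zero]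
  rw [inv_pow, Real.sq_sqrt (by positivity : (0:ℝ) ≤ 2 * Real.pi)]
  rw [div_inv_eq_mul, one_div]
  field_simp

lemma continuousAt_qfun : ContinuousAt qfun 0 := by
  have hA : Afun 0 ^ 2 ≠ 0 := by
    rw [Afun_zero]
    positivity
  exact (continuousAt_Bfun.div ((continuousAt_Afun.pow 2)) hA)

/-- First-order expansion of the zero-temperature order parameters near the
balanced aspect ratio `γ = 1 + ε`: differentiable solution branches
`(α_x(ε), α_y(ε))` of the saddle system with `α_x(0) = α_y(0) = 0` have linear
coefficients `a₁ = −√(π/8)`, `b₁ = √(π/8)`; in particular `b₁ − a₁ = √(π/2)`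
and `a₁ + b₁ = 0`. -/
theorem first_order_expansion_balanced
    (δ : ℝ) (hδ : 0 < δ)
    (αx αy : ℝ → ℝ)
    (hsys : ∀ ε ∈ Ioo (-δ) δ,
      PhiCdf (αy ε) = (1 + ε) * PhiCdf (αx ε) ∧
      Real.sqrt (1 + ε) * αx ε * Real.sqrt (qfun (αy ε))
        + αy ε * Real.sqrt (qfun (αx ε)) = 0)
    (hx0 : αx 0 = 0) (hy0 : αy 0 = 0)
    (hdx : DifferentiableAt ℝ αx 0) (hdy : DifferentiableAt ℝ αy 0) :
    deriv αx 0 = -Real.sqrt (Real.pi / 8)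
    ∧ deriv αy 0 = Real.sqrt (Real.pi / 8)
    ∧ deriv αy 0 - deriv αx 0 = Real.sqrt (Real.pi / 2)
    ∧ deriv αx 0 + deriv αy 0 = 0 := by
  have hx' := hdx.hasDerivAt
  have hy' := hdy.hasDerivAt
  set a := deriv αx 0 with ha
  set b := deriv αy 0 with hb
  have hc0 : gaussPdf 0 = (Real.sqrt (2 * Real.pi))⁻¹ := by
    unfold gaussPdf; norm_num
  have hsπ : (0:ℝ) < Real.sqrt (2 * Real.pi) := by positivity
  have hIoo : Ioo (-δ) δ ∈ nhds (0:ℝ) := Ioo_mem_nhds (by linarith) hδ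
  -- First equation
  have hΦy : HasDerivAt PhiCdf (gaussPdf 0) (αy 0) := by rw [hy0]; exact hasDerivAt_PhiCdf
  have hΦx : HasDerivAt PhiCdf (gaussPdf 0) (αx 0) := by rw [hx0]; exact hasDerivAt_PhiCdf
  have h1 : HasDerivAt (fun ε => PhiCdf (αy ε)) (gaussPdf 0 * b) 0 := by
    have := hΦy.comp 0 hy'
    exact this
  have h1x : HasDerivAt (fun ε => PhiCdf (αx ε)) (gaussPdf 0 * a) 0 := by
    have := hΦx.comp 0 hx'
    exact this
  have h2 : HasDerivAt (fun ε => (1 + ε) * PhiCdf (αx ε))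
      (1 * PhiCdf (αx 0) + (1 + 0) * (gaussPdf 0 * a)) 0 := by
    exact (((hasDerivAt_id (0:ℝ)).const_add 1)).mul h1x
  have hF : HasDerivAt (fun ε => PhiCdf (αy ε) - (1 + ε) * PhiCdf (αx ε))
      (gaussPdf 0 * b - (1 * PhiCdf (αx 0) + (1 + 0) * (gaussPdf 0 * a))) 0 := h1.sub h2
  have hzero : (fun ε => PhiCdf (αy ε) - (1 + ε) * PhiCdf (αx ε)) =ᶠ[nhds (0:ℝ)]
      fun _ => 0 := by
    filter_upwards [hIoo] with ε hε
    rw [(hsys ε hε).1]; ring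
  have hF0 : HasDerivAt (fun _ : ℝ => (0:ℝ))
      (gaussPdf 0 * b - (1 * PhiCdf (αx 0) + (1 + 0) * (gaussPdf 0 * a))) 0 :=
    hF.congr_of_eventuallyEq hzero.symm
  have hD : gaussPdf 0 * b - (1 * PhiCdf (αx 0) + (1 + 0) * (gaussPdf 0 * a)) = 0 :=
    (hF0.unique (hasDerivAt_const 0 0))
  rw [hx0, PhiCdf_zero, hc0] at hD
  have heq1 : b - a = Real.sqrt (2 * Real.pi) / 2 := by
    have h3 : (Real.sqrt (2 * Real.pi))⁻¹ * (b - a) = 1/2 := by linear_combination hD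
    rw [inv_mul_eq_div, div_eq_iff (ne_of_gt hsπ)] at h3
    linarith
  -- Second equation
  have hqy : Filter.Tendsto (fun ε => Real.sqrt (qfun (αy ε))) (nhdsWithin 0 {(0:ℝ)}ᶜ)
      (nhds (Real.sqrt Real.pi)) := by
    have t1 : Filter.Tendsto (fun ε => qfun (αy ε)) (nhds 0) (nhds Real.pi) := by
      have hq' : ContinuousAt qfun (αy 0) := by rw [hy0]; exact continuousAt_qfun
      have := hq'.comp hdy.continuousAt
      rw [ContinuousAt, Function.comp_apply, hy0, qfun_zero] at this
      exact this
    exact ((Real.continuous_sqrt.tendsto Real.pi).comp t1).mono_left nhdsWithin_le_nhds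
  have hqx : Filter.Tendsto (fun ε => Real.sqrt (qfun (αx ε))) (nhdsWithin 0 {(0:ℝ)}ᶜ)
      (nhds (Real.sqrt Real.pi)) := by
    have t1 : Filter.Tendsto (fun ε => qfun (αx ε)) (nhds 0) (nhds Real.pi) := by
      have hq' : ContinuousAt qfun (αx 0) := by rw [hx0]; exact continuousAt_qfun
      have := hq'.comp hdx.continuousAt
      rw [ContinuousAt, Function.comp_apply, hx0, qfun_zero] at this
      exact this
    exact ((Real.continuous_sqrt.tendsto Real.pi).comp t1).mono_left nhdsWithin_le_nhds
  have hsq1 : Filter.Tendsto (fun ε : ℝ => Real.sqrt (1 + ε)) (nhdsWithin 0 {(0:ℝ)}ᶜ)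
      (nhds 1) := by
    have : Filter.Tendsto (fun ε : ℝ => Real.sqrt (1 + ε)) (nhds 0) (nhds (Real.sqrt (1 + 0))) :=
      (Real.continuous_sqrt.comp (continuous_const.add continuous_id)).tendsto 0
    rw [show Real.sqrt (1 + 0) = 1 by norm_num] at this
    exact this.mono_left nhdsWithin_le_nhds
  have hslope : ∀ (f : ℝ → ℝ), f 0 = 0 → ∀ ε : ℝ, slope f 0 ε = f ε / ε := by
    intro f hf ε
    rw [slope_def_field, hf]
    simp
  have sx : Filter.Tendsto (fun ε => αx ε / ε) (nhdsWithin 0 {(0:ℝ)}ᶜ) (nhds a) := by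
    have := hasDerivAt_iff_tendsto_slope.mp hx'
    refine this.congr fun ε => ?_
    exact hslope αx hx0 ε
  have sy : Filter.Tendsto (fun ε => αy ε / ε) (nhdsWithin 0 {(0:ℝ)}ᶜ) (nhds b) := by
    have := hasDerivAt_iff_tendsto_slope.mp hy'
    refine this.congr fun ε => ?_
    exact hslope αy hy0 ε
  have hG : Filter.Tendsto
      (fun ε => Real.sqrt (1 + ε) * (αx ε / ε) * Real.sqrt (qfun (αy ε))
        + (αy ε / ε) * Real.sqrt (qfun (αx ε)))
      (nhdsWithin 0 {(0:ℝ)}ᶜ)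
      (nhds (1 * a * Real.sqrt Real.pi + b * Real.sqrt Real.pi)) :=
    ((hsq1.mul sx).mul hqy).add (sy.mul hqx)
  have hGzero : Filter.Tendsto
      (fun ε => Real.sqrt (1 + ε) * (αx ε / ε) * Real.sqrt (qfun (αy ε))
        + (αy ε / ε) * Real.sqrt (qfun (αx ε)))
      (nhdsWithin 0 {(0:ℝ)}ᶜ) (nhds 0) := by
    rw [Filter.tendsto_congr' ?_]
    · exact tendsto_const_nhds
    filter_upwards [self_mem_nhdsWithin, mem_nhdsWithin_of_mem_nhds hIoo] with ε hne hε
    have h2 := (hsys ε hε).2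
    have hεne : ε ≠ 0 := hne
    field_simp
    linear_combination h2
  have heq2 : 1 * a * Real.sqrt Real.pi + b * Real.sqrt Real.pi = 0 :=
    tendsto_nhds_unique hG hGzero
  have hπ : (0:ℝ) < Real.sqrt Real.pi := by positivity
  have hab : a + b = 0 := by
    have : (a + b) * Real.sqrt Real.pi = 0 := by linarith
    rcases mul_eq_zero.mp this with h | h
    · exact h
    · exact absurd h (ne_of_gt hπ)
  -- final algebra
  have hs8 : Real.sqrt (2 * Real.pi) = 4 * Real.sqrt (Real.pi / 8) := by
    rw [show (2:ℝ) * Real.pi = 4^2 * (Real.pi / 8) by ring,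
      Real.sqrt_mul (by positivity), Real.sqrt_sq (by norm_num)]
  have hs2 : Real.sqrt (Real.pi / 2) = 2 * Real.sqrt (Real.pi / 8) := by
    rw [show Real.pi / 2 = 2^2 * (Real.pi / 8) by ring,
      Real.sqrt_mul (by positivity), Real.sqrt_sq (by norm_num)]
  rw [hs8] at heq1
  refine ⟨by linarith, by linarith, by rw [hs2]; linarith, by linarith⟩
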